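/- If the exceptional set E_S is empty (equivalently, the projective monomial curve associated to A is arithmetically Cohen–Macaulay), then the sequence (|sA| − |(s−1)A|)_{s≥0} is increasing: for all s ≥ 1, |(s+1)A| − |sA| ≥ |sA| − |(s−1)A|. -/

import Mathlib

open scoped BigOperators

namespace SumsetsCurve

/-- The `s`-fold sumset of `A = {a 0, …, a (n-1)}`:
all sums of `s` elements of `A` (with `0A = {0}`). -/
def sumset (n : ℕ) (a : ℕ → ℕ) (s : ℕ) : Set ℕ :=
  {x | ∃ f : Fin s → ℕ, (∀ i, f i < n) ∧ x = ∑ i, a (f i)}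

/-- The numerical semigroup (additive submonoid of ℕ) generated by `B`. -/
def numSG (B : Set ℕ) : Set ℕ := (AddSubmonoid.closure B : AddSubmonoid ℕ)

/-- `S₁`, the numerical semigroup generated by `A`. -/
def S1 (n : ℕ) (a : ℕ → ℕ) : Set ℕ := numSG {x | ∃ i < n, a i = x}

/-- `S₂`, the numerical semigroup generated by `d - A`. -/
def S2 (n d : ℕ) (a : ℕ → ℕ) : Set ℕ := numSG {x | ∃ i < n, d - a i = x}

/-- The conductor of `S ⊆ ℕ`: the least `c` with `c + ℕ ⊆ S`. -/
noncomputable def conductor (S : Set ℕ) : ℕ := sInf {c | ∀ m, c ≤ m → m ∈ S}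

/-- The genus of `S ⊆ ℕ`: the number of gaps `|ℕ \ S|`. -/
noncomputable def genus (S : Set ℕ) : ℕ := Set.ncard {x : ℕ | x ∉ S}

/-- `C = S ∩ [0, conductor S - 2]` (the inequality is taken in ℤ). -/
def Cpart (S : Set ℕ) : Set ℕ := {x | x ∈ S ∧ (x : ℤ) ≤ (conductor S : ℤ) - 2}

/-- The decomposition `sA = C₁ ⊔ [c₁, sd - c₂] ⊔ (sd - C₂)` of the Structure Theorem,
viewed inside ℤ. -/
def structDecomp (n d : ℕ) (a : ℕ → ℕ) (s : ℕ) : Prop :=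
  (Nat.cast '' sumset n a s : Set ℤ)
      = (Nat.cast '' Cpart (S1 n a))
        ∪ Set.Icc ((conductor (S1 n a) : ℤ)) ((s * d : ℤ) - (conductor (S2 n d a) : ℤ))
        ∪ ((fun c => (s * d : ℤ) - c) '' (Nat.cast '' Cpart (S2 n d a)))
    ∧ Disjoint (Nat.cast '' Cpart (S1 n a) : Set ℤ)
        (Set.Icc ((conductor (S1 n a) : ℤ)) ((s * d : ℤ) - (conductor (S2 n d a) : ℤ)))
    ∧ Disjoint (Nat.cast '' Cpart (S1 n a) : Set ℤ)
        ((fun c => (s * d : ℤ) - c) '' (Nat.cast '' Cpart (S2 n d a)))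
    ∧ Disjoint
        (Set.Icc ((conductor (S1 n a) : ℤ)) ((s * d : ℤ) - (conductor (S2 n d a) : ℤ)))
        ((fun c => (s * d : ℤ) - c) '' (Nat.cast '' Cpart (S2 n d a)))

/-- `σ(A)`: the least `σ` such that the Structure Theorem decomposition holds
for all `s ≥ σ`. -/
noncomputable def sigmaA (n d : ℕ) (a : ℕ → ℕ) : ℕ :=
  sInf {σ | ∀ s, σ ≤ s → structDecomp n d a s}

/-- `r(A)`: the least `r` such that `|sA| = sd + 1 - g₁ - g₂` for all `s ≥ r`
(the regularity of the Hilbert function of `k[C_A]`). -/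
noncomputable def rA (n d : ℕ) (a : ℕ → ℕ) : ℕ :=
  sInf {r | ∀ s, r ≤ s →
    ((sumset n a s).ncard : ℤ)
      = (s : ℤ) * d + 1 - genus (S1 n a) - genus (S2 n d a)}

/-- The homogeneous semigroup `S ⊆ ℕ²` generated by `{(a, d-a) : a ∈ A}`. -/
def SS (n d : ℕ) (a : ℕ → ℕ) : Set (ℕ × ℕ) :=
  (AddSubmonoid.closure {p : ℕ × ℕ | ∃ i < n, p = (a i, d - a i)} : AddSubmonoid (ℕ × ℕ))

/-- The Apery set `AP_S = {p ∈ S : p - (0,d) ∉ S, p - (d,0) ∉ S}`. -/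
def APS (n d : ℕ) (a : ℕ → ℕ) : Set (ℕ × ℕ) :=
  {p ∈ SS n d a |
    (¬ ∃ q ∈ SS n d a, q + (0, d) = p) ∧ (¬ ∃ q ∈ SS n d a, q + (d, 0) = p)}

/-- The exceptional set
`E_S = {p ∈ S : p - (0,d) ∈ S, p - (d,0) ∈ S, p - (d,d) ∉ S}`. -/
def ES (n d : ℕ) (a : ℕ → ℕ) : Set (ℕ × ℕ) :=
  {p ∈ SS n d a |
    (∃ q ∈ SS n d a, q + (0, d) = p) ∧ (∃ q ∈ SS n d a, q + (d, 0) = p) ∧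
      (¬ ∃ q ∈ SS n d a, q + (d, d) = p)}

/-- The level `L_s = {(x,y) ∈ ℕ² : x + y = sd}`. -/
def Lev (d s : ℕ) : Set (ℕ × ℕ) := {p | p.1 + p.2 = s * d}

/-- `AP_s = AP_S ∩ L_s`. -/
def APs (n d : ℕ) (a : ℕ → ℕ) (s : ℕ) : Set (ℕ × ℕ) := APS n d a ∩ Lev d s

/-- `E_s = E_S ∩ L_s`. -/
def Es (n d : ℕ) (a : ℕ → ℕ) (s : ℕ) : Set (ℕ × ℕ) := ES n d a ∩ Lev d s

/-- `m(AP_S) = max {s : AP_s ≠ ∅}`. -/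
noncomputable def mAP (n d : ℕ) (a : ℕ → ℕ) : ℕ := sSup {s | APs n d a s ≠ ∅}

/-- The Apery set of `S₁` with respect to `d`: `{x ∈ S₁ : x - d ∉ S₁}`. -/
def Ap1 (n d : ℕ) (a : ℕ → ℕ) : Set ℕ := {x ∈ S1 n a | ¬ ∃ y ∈ S1 n a, y + d = x}

/-- The Apery set of `S₂` with respect to `d`: `{x ∈ S₂ : x - d ∉ S₂}`. -/
def Ap2 (n d : ℕ) (a : ℕ → ℕ) : Set ℕ := {x ∈ S2 n d a | ¬ ∃ y ∈ S2 n d a, y + d = x}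

/-- `G`, the subgroup of ℤ² generated by `S`. -/
def G (n d : ℕ) (a : ℕ → ℕ) : AddSubgroup (ℤ × ℤ) :=
  AddSubgroup.closure {p | ∃ i < n, p = ((a i : ℤ), (d : ℤ) - (a i : ℤ))}

/-- `S₁` viewed inside ℤ. -/
def S1Z (n : ℕ) (a : ℕ → ℕ) : Set ℤ := Nat.cast '' S1 n a

/-- `S₂` viewed inside ℤ. -/
def S2Z (n d : ℕ) (a : ℕ → ℕ) : Set ℤ := Nat.cast '' S2 n d a

/-- `S' = G ∩ (S₁ × S₂)`. -/
def Sprime (n d : ℕ) (a : ℕ → ℕ) : Set (ℤ × ℤ) :=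
  {p | p ∈ G n d a ∧ p.1 ∈ S1Z n a ∧ p.2 ∈ S2Z n d a}

/-- The homogeneous semigroup `S` viewed inside ℤ². -/
def SZ (n d : ℕ) (a : ℕ → ℕ) : Set (ℤ × ℤ) :=
  (fun p : ℕ × ℕ => ((p.1 : ℤ), (p.2 : ℤ))) '' SS n d a


section Aux

variable {n d : ℕ} {a : ℕ → ℕ}

lemma sumset_zero_eq {x : ℕ} (hx : x ∈ sumset n a 0) : x = 0 := by
  obtain ⟨f, -, rfl⟩ := hx; simp

lemma mem_sumset_zero : (0 : ℕ) ∈ sumset n a 0 :=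
  ⟨fun i => i.elim0, fun i => i.elim0, by simp⟩

lemma sumset_add_elem {s x j : ℕ} (hx : x ∈ sumset n a s) (hj : j < n) :
    x + a j ∈ sumset n a (s + 1) := by
  obtain ⟨f, hf, rfl⟩ := hx
  refine ⟨Fin.cons j f, ?_, ?_⟩
  · intro i
    refine Fin.cases ?_ ?_ i
    · simpa using hj
    · intro k; simpa using hf k
  · simp [Fin.sum_univ_succ, Nat.add_comm]

lemma a_le_d (had : a (n - 1) = d)
    (hmono : ∀ i j, i < j → j ≤ n - 1 → a i < a j) {j : ℕ} (hj : j < n) : a j ≤ d := by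
  rcases eq_or_ne j (n - 1) with h | h
  · rw [h, had]
  · have hj' : j < n - 1 := by omega
    have := hmono j (n - 1) hj' le_rfl
    omega

lemma sumset_le (had : a (n - 1) = d)
    (hmono : ∀ i j, i < j → j ≤ n - 1 → a i < a j) {s x : ℕ}
    (hx : x ∈ sumset n a s) : x ≤ s * d := by
  obtain ⟨f, hf, rfl⟩ := hx
  calc ∑ i, a (f i) ≤ ∑ _i : Fin s, d :=
        Finset.sum_le_sum fun i _ => a_le_d had hmono (hf i)
    _ = s * d := by simp [Finset.sum_const, Nat.mul_comm]

lemma sumset_add_sumset {s t x y : ℕ} (hx : x ∈ sumset n a s) (hy : y ∈ sumset n a t) :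
    x + y ∈ sumset n a (s + t) := by
  induction t generalizing y with
  | zero => rw [sumset_zero_eq hy]; simpa using hx
  | succ t ih =>
    obtain ⟨f, hf, rfl⟩ := hy
    have htail : (∑ i : Fin t, a (f i.succ)) ∈ sumset n a t :=
      ⟨fun i => f i.succ, fun i => hf _, rfl⟩
    have := sumset_add_elem (ih htail) (hf 0)
    have heq : x + ∑ i : Fin (t + 1), a (f i)
        = x + (∑ i : Fin t, a (f i.succ)) + a (f 0) := by
      rw [Fin.sum_univ_succ]; ring
    rw [heq]
    exact this

lemma mem_SS_iff (had : a (n - 1) = d)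
    (hmono : ∀ i j, i < j → j ≤ n - 1 → a i < a j) (p : ℕ × ℕ) :
    p ∈ SS n d a ↔ ∃ s, p.1 ∈ sumset n a s ∧ p.1 + p.2 = s * d := by
  constructor
  · intro hp
    have hp' : p ∈ AddSubmonoid.closure {p : ℕ × ℕ | ∃ i < n, p = (a i, d - a i)} := hp
    clear hp
    induction hp' using AddSubmonoid.closure_induction with
    | mem q hq =>
      obtain ⟨i, hi, rfl⟩ := hq
      refine ⟨1, ⟨fun _ => i, fun _ => hi, by simp⟩, ?_⟩
      have := a_le_d had hmono hi
      simp; omega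
    | zero => exact ⟨0, mem_sumset_zero, by simp⟩
    | add q r hq hr ihq ihr =>
      obtain ⟨s, hqs, hqd⟩ := ihq
      obtain ⟨t, hrt, hrd⟩ := ihr
      exact ⟨s + t, sumset_add_sumset hqs hrt, by simp [Prod.fst_add, Prod.snd_add, add_mul]; omega⟩
  · rintro ⟨s, hx, hsum⟩
    obtain ⟨x, y⟩ := p
    simp only at hx hsum
    induction s generalizing x y with
    | zero =>
      have : x = 0 := sumset_zero_eq hx
      subst this
      have : y = 0 := by omega
      subst this
      exact AddSubmonoid.zero_mem _
    | succ s ih =>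
      obtain ⟨f, hf, rfl⟩ := hx
      set x0 := a (f 0) with hx0
      have hrest : (∑ i : Fin s, a (f i.succ)) ∈ sumset n a s :=
        ⟨fun i => f i.succ, fun i => hf _, rfl⟩
      set r := ∑ i : Fin s, a (f i.succ) with hr
      have hxsplit : ∑ i : Fin (s + 1), a (f i) = x0 + r := by
        rw [Fin.sum_univ_succ]
      have hrle : r ≤ s * d := sumset_le had hmono hrest
      have hx0le : x0 ≤ d := a_le_d had hmono (hf 0)
      have hSgen : ((x0, d - x0) : ℕ × ℕ) ∈ SS n d a :=
        AddSubmonoid.subset_closure ⟨f 0, hf 0, rfl⟩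
      have hSrest : ((r, s * d - r) : ℕ × ℕ) ∈ SS n d a :=
        ih r (s * d - r) hrest (by omega)
      have hsum' : (∑ i : Fin (s+1), a (f i)) + y = (s+1) * d := hsum
      have : ((∑ i : Fin (s + 1), a (f i), y) : ℕ × ℕ)
          = (x0, d - x0) + (r, s * d - r) := by
        have : y = (d - x0) + (s * d - r) := by
          rw [hxsplit] at hsum'
          have : (s + 1) * d = s * d + d := by ring
          omega
        simp [Prod.ext_iff, hxsplit, this]
      rw [this]
      exact AddSubmonoid.add_mem _ hSgen hSrest


lemma key_lemma (hn : 0 < n) (had : a (n - 1) = d) (hd : 0 < d)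
    (hmono : ∀ i j, i < j → j ≤ n - 1 → a i < a j)
    (hCM : ES n d a = ∅) {s y : ℕ} (hs : 1 ≤ s)
    (hy : y ∈ sumset n a s) (hyd : y + d ∈ sumset n a s) :
    y ∈ sumset n a (s - 1) := by
  have hn1 : n - 1 < n := by omega
  have hyle : y ≤ s * d := sumset_le had hmono hy
  have hydle : y + d ≤ s * d := sumset_le had hmono hyd
  have hmul : (s + 1) * d = s * d + d := by ring
  have hmul2 : (s - 1) * d = s * d - d := by
    cases s with
    | zero => omega
    | succ m => rw [Nat.succ_sub_one, Nat.succ_mul]; omega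
  set p : ℕ × ℕ := (y + d, s * d - y) with hp
  have hpS : p ∈ SS n d a := by
    rw [mem_SS_iff had hmono]
    refine ⟨s + 1, ?_, by show (y + d) + (s * d - y) = (s + 1) * d; rw [hmul]; omega⟩
    have := sumset_add_elem hy hn1
    rwa [had] at this
  have hq1 : ∃ q ∈ SS n d a, q + (0, d) = p := by
    refine ⟨(y + d, s * d - (y + d)), ?_, ?_⟩
    · rw [mem_SS_iff had hmono]
      exact ⟨s, hyd, by show (y + d) + (s * d - (y + d)) = s * d; omega⟩
    · show ((y + d) + 0, s * d - (y + d) + d) = (y + d, s * d - y)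
      rw [Prod.mk.injEq]
      exact ⟨by omega, by omega⟩
  have hq2 : ∃ q ∈ SS n d a, q + (d, 0) = p := by
    refine ⟨(y, s * d - y), ?_, ?_⟩
    · rw [mem_SS_iff had hmono]
      exact ⟨s, hy, by show y + (s * d - y) = s * d; omega⟩
    · show (y + d, s * d - y + 0) = (y + d, s * d - y)
      rw [Prod.mk.injEq]
      exact ⟨rfl, by omega⟩
  have hpnotE : p ∉ ES n d a := by rw [hCM]; exact Set.notMem_empty p
  have hq3 : ∃ q ∈ SS n d a, q + (d, d) = p := by
    by_contra hcon
    exact hpnotE ⟨hpS, hq1, hq2, hcon⟩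
  obtain ⟨q, hqS, hqeq⟩ := hq3
  rw [mem_SS_iff had hmono] at hqS
  obtain ⟨t, hq1mem, hqsum⟩ := hqS
  have h1 : q.1 + d = y + d := congrArg Prod.fst hqeq
  have h2 : q.2 + d = s * d - y := congrArg Prod.snd hqeq
  have hq1y : q.1 = y := by omega
  have htd : t * d = (s - 1) * d := by omega
  have ht : t = s - 1 := Nat.eq_of_mul_eq_mul_right hd htd
  rw [hq1y, ht] at hq1mem
  exact hq1mem

lemma sumset_mono_succ (hn : 0 < n) (ha0 : a 0 = 0) {s x : ℕ}
    (hx : x ∈ sumset n a s) : x ∈ sumset n a (s + 1) := by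
  have := sumset_add_elem hx hn
  rwa [ha0, Nat.add_zero] at this


end Aux

/-- If `E_S = ∅` (i.e., `C_A` is arithmetically Cohen–Macaulay), then the sequence
`(|sA| - |(s-1)A|)ₛ` is increasing: for all `s ≥ 1`,
`|(s+1)A| - |sA| ≥ |sA| - |(s-1)A|`. -/
theorem CM_increasing_differences (n d : ℕ) (a : ℕ → ℕ)
    (hn : 4 ≤ n)
    (ha0 : a 0 = 0)
    (had : a (n - 1) = d)
    (hmono : ∀ i j, i < j → j ≤ n - 1 → a i < a j)
    (hgcd : (Finset.Icc 1 (n - 1)).gcd a = 1)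
    (hCM : ES n d a = ∅) :
    ∀ s : ℕ, 1 ≤ s →
      ((sumset n a s).ncard : ℤ) - ((sumset n a (s - 1)).ncard : ℤ)
        ≤ ((sumset n a (s + 1)).ncard : ℤ) - ((sumset n a s).ncard : ℤ) := by
  intro s hs
  have hn0 : 0 < n := by omega
  have hd : 0 < d := by
    have := hmono 0 (n - 1) (by omega) le_rfl
    rw [ha0, had] at this; exact this
  set A0 := sumset n a (s - 1) with hA0
  set A1 := sumset n a s with hA1
  set A2 := sumset n a (s + 1) with hA2
  have h01 : A0 ⊆ A1 := by
    intro x hx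
    have := sumset_mono_succ hn0 ha0 (a := a) hx
    have hseq : s - 1 + 1 = s := by omega
    rwa [hseq] at this
  have h12 : A1 ⊆ A2 := fun x hx => sumset_mono_succ hn0 ha0 hx
  have hfin : ∀ t : ℕ, (sumset n a t).Finite := fun t =>
    (Set.finite_Iic (t * d)).subset fun x hx => sumset_le had hmono hx
  have hfin0 : A0.Finite := hfin _
  have hfin1 : A1.Finite := hfin _
  have hfin2 : A2.Finite := hfin _
  -- injection (+ d) : A1 \ A0 → A2 \ A1
  have himg : (fun y => y + d) '' (A1 \ A0) ⊆ A2 \ A1 := by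
    rintro _ ⟨y, ⟨hy1, hy0⟩, rfl⟩
    constructor
    · have := sumset_add_elem hy1 (show n - 1 < n by omega)
      rwa [had] at this
    · intro hyd
      exact hy0 (key_lemma hn0 had hd hmono hCM hs hy1 hyd)
  have hinj : Set.InjOn (fun y => y + d) (A1 \ A0) := fun x _ y _ h => by simp only at h; omega
  have hcard1 : (A1 \ A0).ncard = ((fun y => y + d) '' (A1 \ A0)).ncard :=
    (Set.ncard_image_of_injOn hinj).symm
  have hcard2 : ((fun y => y + d) '' (A1 \ A0)).ncard ≤ (A2 \ A1).ncard :=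
    Set.ncard_le_ncard himg (hfin2.subset Set.diff_subset)
  have hle : (A1 \ A0).ncard ≤ (A2 \ A1).ncard := by omega
  have he1 : (A1 \ A0).ncard + A0.ncard = A1.ncard :=
    Set.ncard_diff_add_ncard_of_subset h01 hfin1
  have he2 : (A2 \ A1).ncard + A1.ncard = A2.ncard :=
    Set.ncard_diff_add_ncard_of_subset h12 hfin2
  have : A1.ncard + A1.ncard ≤ A2.ncard + A0.ncard := by omega
  push_cast
  omega


end SumsetsCurve
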